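/- For fixed n, the sparsity spa(V(n,d)) = 1 − nnz(V(n,d))/C(n+d-1,d)² tends to 0 as d → ∞; for fixed d, it tends to 1 as n → ∞. -/

import Mathlib

open Filter Finset

/-- Number of nonzero entries of the power-product matrix `V(n,d)`. -/
def nnzV (n d : ℕ) : ℕ :=
  ((Finset.Nat.antidiagonalTuple n d ×ˢ Finset.Nat.antidiagonalTuple n d).filter
    fun p => ∏ k, p.1 k ^ p.2 k ≠ 0).card

/-- Sparsity of `V(n,d)`: one minus the ratio of nonzero entries to the total
number of entries `C(n+d-1,d)²`. -/
noncomputable def spaV (n d : ℕ) : ℝ :=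
  1 - (nnzV n d : ℝ) / ((n + d - 1).choose d : ℝ) ^ 2

lemma card_adt (n d : ℕ) :
    (Finset.Nat.antidiagonalTuple n d).card = (n + d - 1).choose d := by
  have h1 : Fintype.card (Sym (Fin n) d) = (n + d - 1).choose d := by
    rw [Sym.card_sym_eq_choose, Fintype.card_fin]
  rw [← h1, ← Fintype.card_coe]
  refine Fintype.card_congr ?_
  refine
    { toFun := fun f => ⟨Finsupp.toMultiset (Finsupp.equivFunOnFinite.symm f.1), ?_⟩
      invFun := fun m => ⟨Finsupp.equivFunOnFinite (Multiset.toFinsupp m.1), ?_⟩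
      left_inv := ?_
      right_inv := ?_ }
  · have := f.2
    rw [Finset.Nat.mem_antidiagonalTuple] at this
    rw [Finsupp.card_toMultiset, Finsupp.sum_fintype _ _ (fun _ => rfl)]
    simpa using this
  · rw [Finset.Nat.mem_antidiagonalTuple]
    have := m.2
    simp only [Finsupp.equivFunOnFinite_apply, Multiset.toFinsupp_apply]
    rw [Multiset.sum_count_eq_card (fun _ _ => Finset.mem_univ _), this]
  · intro f; ext k; simp
  · intro m; ext; simp

lemma adt_le {n d : ℕ} {q : Fin n → ℕ} (hq : q ∈ Finset.Nat.antidiagonalTuple n d)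
    (k : Fin n) : q k ≤ d := by
  rw [Finset.Nat.mem_antidiagonalTuple] at hq
  exact hq ▸ Finset.single_le_sum (fun _ _ => Nat.zero_le _) (Finset.mem_univ k)

lemma nnz_upper (n d : ℕ) :
    nnzV n d ≤ (n + d - 1).choose d * (d + 1) ^ d := by
  classical
  set s := Finset.Nat.antidiagonalTuple n d with hs
  set F := (s ×ˢ s).filter (fun p => ∏ k, p.1 k ^ p.2 k ≠ 0) with hF
  have hmemF : ∀ x ∈ F, (x.1 ∈ s ∧ x.2 ∈ s) ∧ ∀ k, x.1 k ^ x.2 k ≠ 0 := by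
    intro x hx
    rw [hF, Finset.mem_filter, Finset.mem_product] at hx
    refine ⟨hx.1, ?_⟩
    intro k
    exact fun h => hx.2 (Finset.prod_eq_zero (Finset.mem_univ k) h)
  have hfib : ∀ x ∈ F, x.1 ∈ s := fun x hx => (hmemF x hx).1.1
  have hcard : F.card = ∑ p ∈ s, (F.filter fun x => x.1 = p).card :=
    Finset.card_eq_sum_card_fiberwise hfib
  have hbound : ∀ p ∈ s, (F.filter fun x => x.1 = p).card ≤ (d + 1) ^ d := by
    intro p hp
    set S := Finset.univ.filter (fun k : Fin n => p k ≠ 0) with hSdef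
    have hScard : S.card ≤ d := by
      have h1 : S.card = ∑ k ∈ S, 1 := by simp
      have h2 : ∑ k ∈ S, 1 ≤ ∑ k ∈ S, p k := by
        refine Finset.sum_le_sum fun k hk => ?_
        rw [hSdef, Finset.mem_filter] at hk
        omega
      have h3 : ∑ k ∈ S, p k ≤ ∑ k, p k :=
        Finset.sum_le_sum_of_subset (Finset.subset_univ S)
      have h4 : ∑ k, p k = d := by
        have := hp; rw [hs, Finset.Nat.mem_antidiagonalTuple] at this; exact this
      omega
    calc (F.filter fun x => x.1 = p).card
        ≤ (Fintype.piFinset fun _ : ↥S => Finset.range (d + 1)).card := by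
          refine Finset.card_le_card_of_injOn
            (fun x => fun k : ↥S => x.2 k.1) ?_ ?_
          · intro x hx
            rw [Finset.mem_coe, Finset.mem_filter] at hx
            rw [Finset.mem_coe, Fintype.mem_piFinset]
            intro k
            rw [Finset.mem_range, Nat.lt_succ_iff]
            exact adt_le ((hmemF x hx.1).1.2) k.1
          · intro x hx y hy hxy
            simp only [Finset.coe_filter, Set.mem_setOf_eq] at hx hy
            have hx2 := hmemF x hx.1
            have hy2 := hmemF y hy.1
            refine Prod.ext (hx.2.trans hy.2.symm) ?_
            funext k
            by_cases hk : p k = 0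
            · have h1 : x.2 k = 0 := by
                have := hx2.2 k; rw [hx.2, hk] at this
                by_contra h0
                exact this (zero_pow h0)
              have h2 : y.2 k = 0 := by
                have := hy2.2 k; rw [hy.2, hk] at this
                by_contra h0
                exact this (zero_pow h0)
              rw [h1, h2]
            · have hkS : k ∈ S := by rw [hSdef, Finset.mem_filter]; exact ⟨Finset.mem_univ _, hk⟩
              exact congrFun hxy ⟨k, hkS⟩
      _ = (d + 1) ^ S.card := by
          rw [Fintype.card_piFinset]
          simp [Fintype.card_coe]
      _ ≤ (d + 1) ^ d := Nat.pow_le_pow_right (Nat.succ_le_succ (Nat.zero_le d)) hScard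
  calc nnzV n d = F.card := rfl
    _ = ∑ p ∈ s, (F.filter fun x => x.1 = p).card := hcard
    _ ≤ ∑ _p ∈ s, (d + 1) ^ d := Finset.sum_le_sum hbound
    _ = s.card * (d + 1) ^ d := by rw [Finset.sum_const, smul_eq_mul]
    _ = (n + d - 1).choose d * (d + 1) ^ d := by rw [hs, card_adt]

lemma nnz_lower (n d : ℕ) (hn : 0 < n) (hnd : n ≤ d) :
    (d - 1).choose (n - 1) * (n + d - 1).choose d ≤ nnzV n d := by
  classical
  set s := Finset.Nat.antidiagonalTuple n d with hs
  set F := (s ×ˢ s).filter (fun p => ∏ k, p.1 k ^ p.2 k ≠ 0) with hF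
  set P := s.filter (fun p => ∀ k, p k ≠ 0) with hP
  have hsub : P ×ˢ s ⊆ F := by
    intro x hx
    rw [Finset.mem_product] at hx
    rw [hF, Finset.mem_filter, Finset.mem_product]
    obtain ⟨hx1, hx2⟩ := hx
    rw [hP, Finset.mem_filter] at hx1
    refine ⟨⟨hx1.1, hx2⟩, ?_⟩
    exact Finset.prod_ne_zero_iff.2 fun k _ => pow_ne_zero _ (hx1.2 k)
  have hPcard : P.card = (d - 1).choose (n - 1) := by
    have hbij : P.card = (Finset.Nat.antidiagonalTuple n (d - n)).card := by
      refine Finset.card_nbij' (fun p k => p k - 1) (fun q k => q k + 1) ?_ ?_ ?_ ?_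
      · intro p hp
        rw [hP, Finset.mem_coe, Finset.mem_filter, hs, Finset.Nat.mem_antidiagonalTuple] at hp
        rw [Finset.mem_coe, Finset.Nat.mem_antidiagonalTuple]
        show ∑ k, (p k - 1) = d - n
        have h1 : ∑ k, (p k - 1) + ∑ k : Fin n, 1 = ∑ k, p k := by
          rw [← Finset.sum_add_distrib]
          refine Finset.sum_congr rfl fun k _ => ?_
          have := hp.2 k; omega
        have h2 : (∑ k : Fin n, 1) = n := by simp
        omega
      · intro q hq
        rw [Finset.mem_coe, Finset.Nat.mem_antidiagonalTuple] at hq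
        rw [Finset.mem_coe, hP, Finset.mem_filter, hs, Finset.Nat.mem_antidiagonalTuple]
        constructor
        · show ∑ k, (q k + 1) = d
          rw [Finset.sum_add_distrib, hq]
          have h2 : (∑ k : Fin n, 1) = n := by simp
          omega
        · intro k
          show q k + 1 ≠ 0
          omega
      · intro p hp
        rw [hP, Finset.mem_coe, Finset.mem_filter] at hp
        funext k
        show (p k - 1) + 1 = p k
        have := hp.2 k; omega
      · intro q _
        funext k
        show (q k + 1) - 1 = q k
        omega
    rw [hbij, card_adt]
    have h1 : n + (d - n) - 1 = d - 1 := by omega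
    have h2 : (d - 1).choose (d - n) = (d - 1).choose (n - 1) := by
      have h3 : n - 1 ≤ d - 1 := by omega
      have h4 : (d - 1) - (n - 1) = d - n := by omega
      rw [← h4, Nat.choose_symm h3]
    rw [h1, h2]
  calc (d - 1).choose (n - 1) * (n + d - 1).choose d
      = P.card * s.card := by rw [hPcard, hs, card_adt]
    _ = (P ×ˢ s).card := (Finset.card_product P s).symm
    _ ≤ F.card := Finset.card_le_card hsub
    _ = nnzV n d := rfl

lemma aux_lim (a c : ℝ) (hc : 0 ≤ c) :
    Tendsto (fun d : ℕ => ((d : ℝ) - a) / ((d : ℝ) + c)) atTop (nhds 1) := by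
  have h0 : Tendsto (fun d : ℕ => (d : ℝ) + c) atTop atTop :=
    tendsto_atTop_add_const_right _ c tendsto_natCast_atTop_atTop
  have h1 : Tendsto (fun d : ℕ => (a + c) / ((d : ℝ) + c)) atTop (nhds 0) :=
    Tendsto.div_atTop tendsto_const_nhds h0
  have h2 : Tendsto (fun d : ℕ => 1 - (a + c) / ((d : ℝ) + c)) atTop (nhds 1) := by
    simpa using tendsto_const_nhds.sub h1
  refine h2.congr' ?_
  filter_upwards [eventually_ge_atTop 1] with d hd
  have hpos : (0 : ℝ) < (d : ℝ) + c := by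
    have : (1 : ℝ) ≤ (d : ℝ) := by exact_mod_cast hd
    linarith
  rw [eq_div_iff hpos.ne', sub_mul, one_mul, div_mul_cancel₀ _ hpos.ne']
  ring

lemma ratio_lim (n : ℕ) (hn : 0 < n) :
    Tendsto (fun d : ℕ => ((d - 1).choose (n - 1) : ℝ) / ((n + d - 1).choose d : ℝ))
      atTop (nhds 1) := by
  have key : (fun d : ℕ => ((d - 1).choose (n - 1) : ℝ) / ((n + d - 1).choose d : ℝ))
      =ᶠ[atTop] fun d : ℕ =>
        ∏ i ∈ Finset.range (n - 1), (((d - 1 - i : ℕ) : ℝ) / ((n + d - 1 - i : ℕ) : ℝ)) := by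
    filter_upwards [eventually_ge_atTop n] with d hd
    have hsymm : (n + d - 1).choose d = (n + d - 1).choose (n - 1) := by
      have h1 : d ≤ n + d - 1 := by omega
      have h2 : (n + d - 1) - d = n - 1 := by omega
      rw [← h2, Nat.choose_symm h1]
    rw [hsymm]
    have hne : ((Nat.factorial (n - 1) : ℕ) : ℝ) ≠ 0 := by
      exact_mod_cast Nat.factorial_ne_zero (n - 1)
    have hratio : ((d - 1).choose (n - 1) : ℝ) / ((n + d - 1).choose (n - 1) : ℝ)
        = ((d - 1).descFactorial (n - 1) : ℝ) / ((n + d - 1).descFactorial (n - 1) : ℝ) := by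
      rw [Nat.descFactorial_eq_factorial_mul_choose, Nat.descFactorial_eq_factorial_mul_choose]
      push_cast
      rw [mul_div_mul_left _ _ hne]
    rw [hratio, Nat.descFactorial_eq_prod_range, Nat.descFactorial_eq_prod_range]
    push_cast
    rw [Finset.prod_div_distrib]
  have hfac : Tendsto
      (fun d : ℕ => ∏ i ∈ Finset.range (n - 1),
        (((d - 1 - i : ℕ) : ℝ) / ((n + d - 1 - i : ℕ) : ℝ))) atTop
        (nhds (∏ _i ∈ Finset.range (n - 1), (1 : ℝ))) := by
    refine tendsto_finset_prod _ ?_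
    intro i hi
    rw [Finset.mem_range] at hi
    have hbase := aux_lim ((i : ℝ) + 1) ((n - 1 - i : ℕ) : ℝ) (by positivity)
    refine hbase.congr' ?_
    filter_upwards [eventually_ge_atTop (n + i + 1)] with d hd
    have e1 : ((d - 1 - i : ℕ) : ℝ) = (d : ℝ) - ((i : ℝ) + 1) := by
      have h : d - 1 - i = d - (i + 1) := by omega
      rw [h, Nat.cast_sub (by omega)]
      push_cast; ring
    have e2 : ((n + d - 1 - i : ℕ) : ℝ) = (d : ℝ) + ((n - 1 - i : ℕ) : ℝ) := by
      have h : n + d - 1 - i = d + (n - 1 - i) := by omega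
      rw [h]
      push_cast; ring
    rw [e1, e2]
  rw [Finset.prod_const_one] at hfac
  exact hfac.congr' key.symm

lemma le_choose (m k : ℕ) (hk1 : 1 ≤ k) (hk2 : k ≤ m / 2) : m ≤ m.choose k := by
  induction k with
  | zero => omega
  | succ k ih =>
    rcases Nat.lt_or_ge k 1 with h | h
    · have : k = 0 := by omega
      subst this
      simp
    · have h1 : m ≤ m.choose k := ih h (by omega)
      exact h1.trans (Nat.choose_le_succ_of_lt_half_left (by omega))

lemma nnz_le_sq (n d : ℕ) : nnzV n d ≤ ((n + d - 1).choose d) ^ 2 := by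
  calc nnzV n d ≤ (Finset.Nat.antidiagonalTuple n d ×ˢ Finset.Nat.antidiagonalTuple n d).card :=
        Finset.card_le_card (Finset.filter_subset _ _)
    _ = ((n + d - 1).choose d) ^ 2 := by
        rw [Finset.card_product, card_adt, sq]

theorem stmt13 :
    (∀ n : ℕ, 0 < n → Tendsto (fun d => spaV n d) atTop (nhds 0))
    ∧ (∀ d : ℕ, 0 < d → Tendsto (fun n => spaV n d) atTop (nhds 1)) := by
  constructor
  · intro n hn
    have hr : Tendsto (fun d : ℕ => (nnzV n d : ℝ) / ((n + d - 1).choose d : ℝ) ^ 2)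
        atTop (nhds 1) := by
      refine tendsto_of_tendsto_of_tendsto_of_le_of_le' (ratio_lim n hn)
        tendsto_const_nhds ?_ ?_
      · filter_upwards [eventually_ge_atTop n] with d hd
        have hCpos : 0 < (n + d - 1).choose d := Nat.choose_pos (by omega)
        have hCpos' : (0 : ℝ) < ((n + d - 1).choose d : ℝ) := by exact_mod_cast hCpos
        have hlow := nnz_lower n d hn hd
        have hlow' : ((d - 1).choose (n - 1) : ℝ) * ((n + d - 1).choose d : ℝ)
            ≤ (nnzV n d : ℝ) := by exact_mod_cast hlow
        have he : ((d - 1).choose (n - 1) : ℝ) / ((n + d - 1).choose d : ℝ)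
            = ((d - 1).choose (n - 1) : ℝ) * ((n + d - 1).choose d : ℝ)
              / ((n + d - 1).choose d : ℝ) ^ 2 := by
          rw [sq, mul_div_mul_right _ _ hCpos'.ne']
        rw [he]
        gcongr
      · filter_upwards [eventually_ge_atTop 1] with d hd
        have hCpos : 0 < (n + d - 1).choose d := Nat.choose_pos (by omega)
        have hCpos' : (0 : ℝ) < ((n + d - 1).choose d : ℝ) := by exact_mod_cast hCpos
        rw [div_le_one (by positivity)]
        exact_mod_cast nnz_le_sq n d
    have hfinal := (tendsto_const_nhds : Tendsto (fun _ : ℕ => (1 : ℝ)) atTop (nhds 1)).sub hr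
    simpa [spaV] using hfinal
  · intro d hd
    have hr : Tendsto (fun n : ℕ => (nnzV n d : ℝ) / ((n + d - 1).choose d : ℝ) ^ 2)
        atTop (nhds 0) := by
      have hK : Tendsto (fun n : ℕ => (((d + 1) ^ d : ℕ) : ℝ) / (n : ℝ)) atTop (nhds 0) :=
        Tendsto.div_atTop tendsto_const_nhds tendsto_natCast_atTop_atTop
      refine tendsto_of_tendsto_of_tendsto_of_le_of_le' tendsto_const_nhds hK ?_ ?_
      · filter_upwards with n
        positivity
      · filter_upwards [eventually_ge_atTop (d + 1)] with n hn
        have hnC : n ≤ (n + d - 1).choose d := by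
          have h2 : d ≤ (n + d - 1) / 2 := by omega
          have := le_choose (n + d - 1) d hd h2
          omega
        have hCpos : 0 < (n + d - 1).choose d := by omega
        have hCpos' : (0 : ℝ) < ((n + d - 1).choose d : ℝ) := by exact_mod_cast hCpos
        have hnpos : (0 : ℝ) < (n : ℝ) := by
          have : 0 < n := by omega
          exact_mod_cast this
        have h1 : (nnzV n d : ℝ)
            ≤ ((n + d - 1).choose d : ℝ) * (((d + 1) ^ d : ℕ) : ℝ) := by
          exact_mod_cast nnz_upper n d
        calc (nnzV n d : ℝ) / ((n + d - 1).choose d : ℝ) ^ 2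
            ≤ ((n + d - 1).choose d : ℝ) * (((d + 1) ^ d : ℕ) : ℝ)
              / ((n + d - 1).choose d : ℝ) ^ 2 := by gcongr
          _ = (((d + 1) ^ d : ℕ) : ℝ) / ((n + d - 1).choose d : ℝ) := by
              rw [sq, mul_comm (((n + d - 1).choose d : ℝ)) _, mul_div_mul_right _ _ hCpos'.ne']
          _ ≤ (((d + 1) ^ d : ℕ) : ℝ) / (n : ℝ) := by
              have hnC' : (n : ℝ) ≤ ((n + d - 1).choose d : ℝ) := by exact_mod_cast hnC
              gcongr
    have hfinal := (tendsto_const_nhds : Tendsto (fun _ : ℕ => (1 : ℝ)) atTop (nhds 1)).sub hr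
    simpa [spaV] using hfinal
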